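/- arXiv:1907.09513 — 2 statements merged into one kernel-verified Lean document; each statement's English description precedes it below -/
import Mathlib

section
/- If α is a limit ordinal such that L_α satisfies ZF⁻ (ZF without power set, with collection), then α is regular in L_{α+1}: there is no function f ∈ L_{α+1} mapping some δ < α cofinally into α. -/
open Ordinal

/-- First-order formulas in the language of set theory, with `n` free variables. -/
inductive EForm : ℕ → Type
  | mem {n} : Fin n → Fin n → EForm n
  | eq {n} : Fin n → Fin n → EForm n
  | not {n} : EForm n → EForm n
  | and {n} : EForm n → EForm n → EForm n
  | ex {n} : EForm (n + 1) → EForm n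

/-- Realization of a formula in the ∈-structure with domain `X` (a ZF-set), under a
valuation `v` of the free variables. -/
def ERealize (X : ZFSet) : {n : ℕ} → EForm n → (Fin n → ZFSet) → Prop
  | _, .mem i j, v => v i ∈ v j
  | _, .eq i j, v => v i = v j
  | _, .not φ, v => ¬ ERealize X φ v
  | _, .and φ ψ, v => ERealize X φ v ∧ ERealize X ψ v
  | _, .ex φ, v => ∃ y ∈ X, ERealize X φ (Fin.snoc v y)

/-- `S` is a subset of `X` definable over the ∈-structure `(X, ∈)` with parameters from `X`. -/
def IsDefinableSubset (X S : ZFSet) : Prop :=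
  S ⊆ X ∧ ∃ (n : ℕ) (φ : EForm (n + 1)) (p : Fin n → ZFSet),
    (∀ i, p i ∈ X) ∧ ∀ y ∈ X, (y ∈ S ↔ ERealize X φ (Fin.snoc p y))

/-- `Def X`: the set of all subsets of `X` definable over `(X, ∈)` with parameters. -/
noncomputable def DefSet (X : ZFSet) : ZFSet :=
  ZFSet.sep (fun S => IsDefinableSubset X S) (ZFSet.powerset X)

/-- Gödel's constructible hierarchy: `Lset 0 = ∅`, `Lset (o+1) = Def (Lset o)`,
and unions at limits. -/
noncomputable def Lset (o : Ordinal) : ZFSet :=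
  o.limitRecOn ∅ (fun _ ih => DefSet ih)
    (fun o _ ih => ZFSet.sUnion (ZFSet.range fun i : Shrink.{0} (Set.Iio o) =>
      ih ((equivShrink (Set.Iio o)).symm i).1 ((equivShrink (Set.Iio o)).symm i).2))

/-- The von Neumann ordinal (as a ZF-set) corresponding to an ordinal. -/
noncomputable def vN (o : Ordinal) : ZFSet :=
  o.limitRecOn ∅ (fun _ ih => insert ih ih)
    (fun o _ ih => ZFSet.sUnion (ZFSet.range fun i : Shrink.{0} (Set.Iio o) =>
      ih ((equivShrink (Set.Iio o)).symm i).1 ((equivShrink (Set.Iio o)).symm i).2))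

/-- Extensionality relativized to `X`. -/
def AxExt (X : ZFSet) : Prop :=
  ∀ a ∈ X, ∀ b ∈ X, (∀ z ∈ X, (z ∈ a ↔ z ∈ b)) → a = b

/-- Pairing relativized to `X`. -/
def AxPair (X : ZFSet) : Prop :=
  ∀ a ∈ X, ∀ b ∈ X, ∃ c ∈ X, ∀ z ∈ X, (z ∈ c ↔ z = a ∨ z = b)

/-- Union relativized to `X`. -/
def AxUnion (X : ZFSet) : Prop :=
  ∀ a ∈ X, ∃ u ∈ X, ∀ z ∈ X, (z ∈ u ↔ ∃ w ∈ X, w ∈ a ∧ z ∈ w)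

/-- Infinity relativized to `X`. -/
def AxInf (X : ZFSet) : Prop :=
  ∃ I ∈ X, (∅ : ZFSet) ∈ I ∧ ∀ z ∈ I, insert z z ∈ I

/-- Foundation relativized to `X`. -/
def AxFound (X : ZFSet) : Prop :=
  ∀ a ∈ X, a ≠ ∅ → ∃ z ∈ a, ∀ w ∈ z, w ∉ a

/-- The separation (comprehension) scheme relativized to `X`, with parameters. -/
def AxSep (X : ZFSet) : Prop :=
  ∀ (n : ℕ) (φ : EForm (n + 1)) (p : Fin n → ZFSet), (∀ i, p i ∈ X) →
    ∀ A ∈ X, ∃ S ∈ X, ∀ z ∈ X, (z ∈ S ↔ z ∈ A ∧ ERealize X φ (Fin.snoc p z))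

/-- The collection scheme relativized to `X`, with parameters: formulas here have
`n` parameter variables followed by the variables `x` and `y`. -/
def AxColl (X : ZFSet) : Prop :=
  ∀ (n : ℕ) (φ : EForm (n + 2)) (p : Fin n → ZFSet), (∀ i, p i ∈ X) →
    ∀ A ∈ X, (∀ x ∈ A, ∃ y ∈ X, ERealize X φ (Fin.snoc (Fin.snoc p x) y)) →
      ∃ B ∈ X, ∀ x ∈ A, ∃ y ∈ B, ERealize X φ (Fin.snoc (Fin.snoc p x) y)

/-- `X ⊨ ZF⁻`: ZF without power set, formulated with the collection scheme. -/
def ZFminus (X : ZFSet) : Prop :=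
  AxExt X ∧ AxPair X ∧ AxUnion X ∧ AxInf X ∧ AxFound X ∧ AxSep X ∧ AxColl X

/-- `f` is (the ZF-set coding) a function from the von Neumann ordinal `δ` to `α`
whose range is cofinal in `α`. -/
def IsCofinalMap (δ α : Ordinal) (f : ZFSet) : Prop :=
  ZFSet.IsFunc (vN δ) (vN α) f ∧
    ∀ β < α, ∃ ι < δ, ∃ γ < α, β ≤ γ ∧ (vN ι).pair (vN γ) ∈ f


section Aux
open ZFSet

lemma Lset_zero : Lset 0 = ∅ := Ordinal.limitRecOn_zero _ _ _

lemma Lset_succ (o : Ordinal) : Lset (o + 1) = DefSet (Lset o) := by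
  rw [Lset, Ordinal.add_one_eq_succ, Ordinal.limitRecOn_succ]
  rfl

lemma Lset_limit {o : Ordinal} (h : Order.IsSuccLimit o) :
    Lset o = ZFSet.sUnion (ZFSet.range fun i : Shrink.{0} (Set.Iio o) =>
      Lset ((equivShrink (Set.Iio o)).symm i).1) := by
  rw [Lset, Ordinal.limitRecOn_limit _ _ _ _ h]
  rfl

lemma mem_Lset_limit {o : Ordinal} (h : Order.IsSuccLimit o) {x : ZFSet} :
    x ∈ Lset o ↔ ∃ β < o, x ∈ Lset β := by
  rw [Lset_limit h]
  simp only [ZFSet.mem_sUnion, ZFSet.mem_range, Set.mem_range]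
  constructor
  · rintro ⟨z, ⟨i, rfl⟩, hx⟩
    exact ⟨_, ((equivShrink (Set.Iio o)).symm i).2, hx⟩
  · rintro ⟨β, hβ, hx⟩
    exact ⟨_, ⟨equivShrink (Set.Iio o) ⟨β, hβ⟩, by simp⟩, hx⟩

lemma vN_zero : vN 0 = ∅ := Ordinal.limitRecOn_zero _ _ _

lemma vN_succ (o : Ordinal) : vN (o + 1) = insert (vN o) (vN o) := by
  rw [vN, Ordinal.add_one_eq_succ, Ordinal.limitRecOn_succ]
  rfl

lemma vN_limit {o : Ordinal} (h : Order.IsSuccLimit o) :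
    vN o = ZFSet.sUnion (ZFSet.range fun i : Shrink.{0} (Set.Iio o) =>
      vN ((equivShrink (Set.Iio o)).symm i).1) := by
  rw [vN, Ordinal.limitRecOn_limit _ _ _ _ h]
  rfl

lemma mem_vN_limit {o : Ordinal} (h : Order.IsSuccLimit o) {x : ZFSet} :
    x ∈ vN o ↔ ∃ β < o, x ∈ vN β := by
  rw [vN_limit h]
  simp only [ZFSet.mem_sUnion, ZFSet.mem_range, Set.mem_range]
  constructor
  · rintro ⟨z, ⟨i, rfl⟩, hx⟩
    exact ⟨_, ((equivShrink (Set.Iio o)).symm i).2, hx⟩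
  · rintro ⟨β, hβ, hx⟩
    exact ⟨_, ⟨equivShrink (Set.Iio o) ⟨β, hβ⟩, by simp⟩, hx⟩

lemma mem_vN {o : Ordinal} {x : ZFSet} : x ∈ vN o ↔ ∃ β < o, x = vN β := by
  induction o using Ordinal.limitRecOn with
  | zero => simp [vN_zero]
  | add_one o ih =>
    rw [vN_succ, Ordinal.add_one_eq_succ]
    simp only [ZFSet.mem_insert_iff, ih]
    constructor
    · rintro (rfl | ⟨β, hβ, rfl⟩)
      · exact ⟨o, Order.lt_succ o, rfl⟩
      · exact ⟨β, hβ.trans (Order.lt_succ o), rfl⟩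
    · rintro ⟨β, hβ, rfl⟩
      rcases Order.lt_succ_iff_eq_or_lt.mp hβ with rfl | hβ
      · exact Or.inl rfl
      · exact Or.inr ⟨β, hβ, rfl⟩
  | limit o ho ih =>
    rw [mem_vN_limit ho]
    constructor
    · rintro ⟨β, hβ, hx⟩
      obtain ⟨γ, hγ, rfl⟩ := (ih β hβ).mp hx
      exact ⟨γ, hγ.trans hβ, rfl⟩
    · rintro ⟨β, hβ, rfl⟩
      exact ⟨β + 1, ho.succ_lt hβ, (ih _ (ho.succ_lt hβ)).mpr ⟨β, Order.lt_succ β, rfl⟩⟩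

universe u

lemma rank_vN (o : Ordinal) : ZFSet.rank (vN o) = Ordinal.lift.{0} o := by
  induction o using Ordinal.induction with
  | h o ih =>
    apply le_antisymm
    · rw [ZFSet.rank_le_iff]
      intro y hy
      obtain ⟨β, hβ, rfl⟩ := mem_vN.mp hy
      rw [ih β hβ]; exact Ordinal.lift_lt.mpr hβ
    · by_contra hlt
      push_neg at hlt
      obtain ⟨β, hβo, hβlift⟩ := Ordinal.lt_lift_iff.mp hlt
      have hm : vN β ∈ vN o := mem_vN.mpr ⟨β, hβo, rfl⟩
      have h2 := ZFSet.rank_lt_of_mem hm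
      rw [ih β hβo, hβlift] at h2
      exact lt_irrefl _ h2

lemma vN_injective : Function.Injective vN := fun a b h => by
  have := congrArg ZFSet.rank h
  rw [rank_vN a, rank_vN b] at this
  exact Ordinal.lift_inj.mp this

lemma vN_mem_vN {a b : Ordinal} : vN a ∈ vN b ↔ a < b := by
  rw [mem_vN]
  constructor
  · rintro ⟨β, hβ, h⟩; rwa [vN_injective h]
  · exact fun h => ⟨a, h, rfl⟩

lemma vN_isTransitive (o : Ordinal) : ZFSet.IsTransitive (vN o) := by
  intro y hy z hz
  obtain ⟨β, hβ, rfl⟩ := mem_vN.mp hy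
  obtain ⟨γ, hγ, rfl⟩ := mem_vN.mp hz
  exact vN_mem_vN.mpr (hγ.trans hβ)

lemma mem_DefSet {X S : ZFSet.{u}} : S ∈ DefSet X ↔ IsDefinableSubset X S := by
  rw [DefSet, ZFSet.mem_sep, ZFSet.mem_powerset]
  exact ⟨fun h => h.2, fun h => ⟨h.1, h⟩⟩

/-- Any element of a transitive `X` is a definable subset of `X`. -/
lemma mem_DefSet_of_mem {X x : ZFSet.{u}} (hX : X.IsTransitive) (hx : x ∈ X) :
    x ∈ DefSet X := by
  rw [mem_DefSet]
  refine ⟨hX.subset_of_mem hx, 1, .mem 1 0, fun _ => x, fun _ => hx, fun y hy => ?_⟩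
  have h0 : (Fin.snoc (fun _ : Fin 1 => x) y : Fin 2 → ZFSet) 0 = x := rfl
  have h1 : (Fin.snoc (fun _ : Fin 1 => x) y : Fin 2 → ZFSet) 1 = y := rfl
  show y ∈ x ↔ ERealize X (.mem 1 0) _
  rw [ERealize, h0, h1]

/-- `X` itself is a definable subset of `X`. -/
lemma self_mem_DefSet (X : ZFSet.{u}) : X ∈ DefSet X := by
  rw [mem_DefSet]
  refine ⟨fun z hz => hz, 0, .eq 0 0, fun i => i.elim0, fun i => i.elim0, fun y hy => ?_⟩
  simpa [ERealize] using hy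

lemma Lset_isTransitive_and_mono (o : Ordinal) :
    ZFSet.IsTransitive (Lset o) ∧ ∀ β ≤ o, Lset β ⊆ Lset o := by
  induction o using Ordinal.limitRecOn with
  | zero =>
    refine ⟨by rw [Lset_zero]; exact ZFSet.isTransitive_empty, fun β hβ => ?_⟩
    rw [nonpos_iff_eq_zero.mp hβ]
  | add_one o ih =>
    have hsub : Lset o ⊆ Lset (o + 1) := by
      rw [Lset_succ]
      exact fun z hz => mem_DefSet_of_mem ih.1 hz
    constructor
    · intro y hy z hz
      rw [Lset_succ] at hy
      exact hsub ((mem_DefSet.mp hy).1 hz)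
    · intro β hβ
      rcases Order.le_succ_iff_eq_or_le.mp (Ordinal.add_one_eq_succ o ▸ hβ) with rfl | h
      · rw [Ordinal.add_one_eq_succ]
      · exact fun z hz => hsub (ih.2 β h hz)
  | limit o ho ih =>
    have hmono : ∀ β ≤ o, Lset β ⊆ Lset o := by
      intro β hβ
      rcases eq_or_lt_of_le hβ with rfl | hβ
      · exact fun z hz => hz
      · intro z hz
        exact (mem_Lset_limit ho).mpr ⟨β, hβ, hz⟩
    refine ⟨fun y hy z hz => ?_, hmono⟩
    obtain ⟨β, hβ, hy⟩ := (mem_Lset_limit ho).mp hy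
    exact hmono β hβ.le (((ih β hβ).1 y hy) hz)

lemma Lset_isTransitive (o : Ordinal) : ZFSet.IsTransitive (Lset o) :=
  (Lset_isTransitive_and_mono o).1

lemma Lset_mono {β o : Ordinal} (h : β ≤ o) : Lset β ⊆ Lset o :=
  (Lset_isTransitive_and_mono o).2 β h

lemma rank_Lset (o : Ordinal) : ZFSet.rank (Lset o) ≤ Ordinal.lift.{0} o := by
  induction o using Ordinal.limitRecOn with
  | zero => simp [Lset_zero]
  | add_one o ih =>
    rw [ZFSet.rank_le_iff]
    intro y hy
    rw [Lset_succ] at hy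
    have : y ⊆ Lset o := (mem_DefSet.mp hy).1
    calc ZFSet.rank y ≤ ZFSet.rank (Lset o) := ZFSet.rank_mono this
    _ ≤ Ordinal.lift.{0} o := ih
    _ < Ordinal.lift.{0} (o + 1) := by
        rw [Ordinal.lift_add, Ordinal.lift_one]; exact lt_add_one _
  | limit o ho ih =>
    rw [ZFSet.rank_le_iff]
    intro y hy
    obtain ⟨β, hβ, hy⟩ := (mem_Lset_limit ho).mp hy
    calc ZFSet.rank y < ZFSet.rank (Lset β) := ZFSet.rank_lt_of_mem hy
    _ ≤ Ordinal.lift.{0} β := ih β hβ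
    _ < Ordinal.lift.{0} o := Ordinal.lift_lt.mpr hβ

lemma rank_lt_of_mem_Lset {o : Ordinal} {x : ZFSet.{0}} (h : x ∈ Lset o) :
    ZFSet.rank x < Ordinal.lift.{0} o :=
  (ZFSet.rank_lt_of_mem h).trans_le (rank_Lset o)

lemma mem3_cycle {a b c : ZFSet.{u}} : a ∈ b → b ∈ c → c ∈ a → False := by
  induction a using ZFSet.inductionOn generalizing b c with
  | _ a ih => exact fun h1 h2 h3 => ih c h3 h3 h1 h2

/-- A transitive, ∈-trichotomous ZF-set of bounded rank is a von Neumann ordinal. -/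
lemma eq_vN_of_ord : ∀ (y : ZFSet.{0}) (b : Ordinal.{0}),
    ZFSet.rank y ≤ Ordinal.lift.{0, 0} b → y.IsTransitive →
    (∀ a ∈ y, ∀ c ∈ y, a ∈ c ∨ a = c ∨ c ∈ a) → ∃ β : Ordinal.{0}, y = vN β := by
  intro y
  induction y using ZFSet.inductionOn with
  | _ y ih =>
    intro b hrank htr htri
    have helt : ∀ z ∈ y, ∃ β, z = vN β := by
      intro z hz
      refine ih z hz b ((ZFSet.rank_lt_of_mem hz).le.trans hrank) ?_ ?_
      · intro v hv w hw
        have hvy : v ∈ y := htr.mem_trans hv hz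
        have hwy : w ∈ y := htr.mem_trans hw hvy
        rcases htri w hwy z hz with h | rfl | h
        · exact h
        · exact absurd hw (ZFSet.mem_asymm hv)
        · exact absurd h (fun h => mem3_cycle h hw hv)
      · intro a ha c hc
        exact htri a (htr.mem_trans ha hz) c (htr.mem_trans hc hz)
    set S : Set Ordinal := {β | vN β ∈ y} with hS
    have hSdc : ∀ β ∈ S, ∀ β' < β, β' ∈ S := by
      intro β hβ β' hβ'
      exact htr.mem_trans (vN_mem_vN.mpr hβ') hβ
    have hne : Sᶜ.Nonempty := by
      refine ⟨b + 1, fun hmem => ?_⟩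
      have h1 := ZFSet.rank_lt_of_mem (show vN (b + 1) ∈ y from hmem)
      rw [rank_vN] at h1
      have h2 : Ordinal.lift.{0, 0} (b + 1) < Ordinal.lift.{0, 0} b := h1.trans_le hrank
      rw [Ordinal.lift_lt] at h2
      exact absurd h2 (not_lt.mpr (lt_add_one b).le)
    have hb₀mem : sInf Sᶜ ∈ Sᶜ := csInf_mem hne
    refine ⟨sInf Sᶜ, ZFSet.ext fun z => ⟨fun hz => ?_, fun hz => ?_⟩⟩
    · obtain ⟨β, rfl⟩ := helt z hz
      have hβS : β ∈ S := hz
      have hlt : β < sInf Sᶜ := by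
        by_contra h
        push_neg at h
        rcases eq_or_lt_of_le h with rfl | h
        · exact hb₀mem hβS
        · exact hb₀mem (hSdc β hβS _ h)
      exact vN_mem_vN.mpr hlt
    · obtain ⟨β, hβ, rfl⟩ := mem_vN.mp hz
      by_contra hmem
      have : sInf Sᶜ ≤ β := csInf_le' hmem
      exact absurd hβ (not_lt.mpr this)

/-! ### Formula helpers -/

def eAll {n : ℕ} (φ : EForm (n + 1)) : EForm n := .not (.ex (.not φ))
def eOr {n : ℕ} (a b : EForm n) : EForm n := .not (.and (.not a) (.not b))
def eImp {n : ℕ} (a b : EForm n) : EForm n := .not (.and a (.not b))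

lemma realize_eAll {X : ZFSet.{u}} {n} {φ : EForm (n + 1)} {v : Fin n → ZFSet.{u}} :
    ERealize X (eAll φ) v ↔ ∀ y ∈ X, ERealize X φ (Fin.snoc v y) := by
  simp only [eAll, ERealize]
  constructor
  · intro h y hy
    by_contra hc
    exact h ⟨y, hy, hc⟩
  · rintro h ⟨y, hy, hc⟩
    exact hc (h y hy)

lemma realize_eOr {X : ZFSet.{u}} {n} {a b : EForm n} {v : Fin n → ZFSet.{u}} :
    ERealize X (eOr a b) v ↔ ERealize X a v ∨ ERealize X b v := by
  simp only [eOr, ERealize]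
  tauto

lemma realize_eImp {X : ZFSet.{u}} {n} {a b : EForm n} {v : Fin n → ZFSet.{u}} :
    ERealize X (eImp a b) v ↔ (ERealize X a v → ERealize X b v) := by
  simp only [eImp, ERealize]
  tauto

lemma snoc10 (w : Fin 1 → ZFSet.{u}) (b : ZFSet.{u}) : (Fin.snoc w b : Fin 2 → ZFSet.{u}) 0 = w 0 := rfl
lemma snoc11 (w : Fin 1 → ZFSet.{u}) (b : ZFSet.{u}) : (Fin.snoc w b : Fin 2 → ZFSet.{u}) 1 = b := rfl
lemma snoc20 (w : Fin 2 → ZFSet.{u}) (b : ZFSet.{u}) : (Fin.snoc w b : Fin 3 → ZFSet.{u}) 0 = w 0 := rfl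
lemma snoc21 (w : Fin 2 → ZFSet.{u}) (b : ZFSet.{u}) : (Fin.snoc w b : Fin 3 → ZFSet.{u}) 1 = w 1 := rfl
lemma snoc22 (w : Fin 2 → ZFSet.{u}) (b : ZFSet.{u}) : (Fin.snoc w b : Fin 3 → ZFSet.{u}) 2 = b := rfl
lemma snoc00 (w : Fin 0 → ZFSet.{u}) (b : ZFSet.{u}) : (Fin.snoc w b : Fin 1 → ZFSet.{u}) 0 = b := rfl

/-- The ∈-formula asserting that the free variable is an ordinal (transitive and
∈-trichotomous). -/
def OrdF : EForm 1 :=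
  .and
    (eAll (eImp (.mem 1 0) (eAll (eImp (.mem 2 1) (.mem 2 0)))))
    (eAll (eImp (.mem 1 0) (eAll (eImp (.mem 2 0)
      (eOr (.mem 1 2) (eOr (.eq 1 2) (.mem 2 1)))))))

lemma realize_mem {X : ZFSet.{u}} {n} {i j : Fin n} {v : Fin n → ZFSet.{u}} :
    ERealize X (.mem i j) v ↔ v i ∈ v j := Iff.rfl

lemma realize_eq {X : ZFSet.{u}} {n} {i j : Fin n} {v : Fin n → ZFSet.{u}} :
    ERealize X (.eq i j) v ↔ v i = v j := Iff.rfl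

lemma realize_and {X : ZFSet.{u}} {n} {a b : EForm n} {v : Fin n → ZFSet.{u}} :
    ERealize X (.and a b) v ↔ ERealize X a v ∧ ERealize X b v := Iff.rfl

lemma realize_not {X : ZFSet.{u}} {n} {a : EForm n} {v : Fin n → ZFSet.{u}} :
    ERealize X (.not a) v ↔ ¬ ERealize X a v := Iff.rfl

lemma realize_ex {X : ZFSet.{u}} {n} {a : EForm (n + 1)} {v : Fin n → ZFSet.{u}} :
    ERealize X (.ex a) v ↔ ∃ y ∈ X, ERealize X a (Fin.snoc v y) := Iff.rfl

lemma realize_OrdF_raw {X : ZFSet.{u}} {v : Fin 1 → ZFSet.{u}} :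
    ERealize X OrdF v ↔
      ((∀ y ∈ X, y ∈ v 0 → ∀ z ∈ X, z ∈ y → z ∈ v 0) ∧
       (∀ y ∈ X, y ∈ v 0 → ∀ z ∈ X, z ∈ v 0 → (y ∈ z ∨ y = z ∨ z ∈ y))) := by
  rw [OrdF, realize_and]
  simp only [realize_eAll, realize_eImp, realize_eOr, realize_mem, realize_eq,
    snoc10, snoc11, snoc20, snoc21, snoc22]

lemma realize_OrdF {X : ZFSet.{u}} (hX : X.IsTransitive) {v : Fin 1 → ZFSet.{u}}
    (hy : v 0 ∈ X) :
    ERealize X OrdF v ↔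
      ((v 0).IsTransitive ∧ ∀ a ∈ v 0, ∀ c ∈ v 0, a ∈ c ∨ a = c ∨ c ∈ a) := by
  have hsub : v 0 ⊆ X := hX.subset_of_mem hy
  rw [realize_OrdF_raw]
  constructor
  · rintro ⟨h1, h2⟩
    refine ⟨fun a ha z hz => h1 a (hsub ha) ha z (hX.mem_trans hz (hsub ha)) hz,
      fun a ha c hc => h2 a (hsub ha) ha c (hsub hc) hc⟩
  · rintro ⟨h1, h2⟩
    exact ⟨fun a _ ha z _ hz => h1.mem_trans hz ha, fun a _ ha c _ hc => h2 a ha c hc⟩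

lemma vN_trich (o : Ordinal) :
    ∀ a ∈ vN o, ∀ c ∈ vN o, a ∈ c ∨ a = c ∨ c ∈ a := by
  intro a ha c hc
  obtain ⟨β, _, rfl⟩ := mem_vN.mp ha
  obtain ⟨γ, _, rfl⟩ := mem_vN.mp hc
  rcases lt_trichotomy β γ with h | h | h
  · exact Or.inl (vN_mem_vN.mpr h)
  · exact Or.inr (Or.inl (by rw [h]))
  · exact Or.inr (Or.inr (vN_mem_vN.mpr h))

lemma vN_subset_Lset_and_mem : ∀ o : Ordinal,
    vN o ⊆ Lset o ∧ vN o ∈ Lset (o + 1) := by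
  intro o
  induction o using Ordinal.induction with
  | h o ih =>
    have hsub : vN o ⊆ Lset o := by
      intro x hx
      obtain ⟨β, hβ, rfl⟩ := mem_vN.mp hx
      exact Lset_mono (by rw [Ordinal.add_one_eq_succ, Order.succ_le_iff]; exact hβ)
        (ih β hβ).2
    refine ⟨hsub, ?_⟩
    rw [Lset_succ, mem_DefSet]
    refine ⟨hsub, 0, OrdF, fun i => i.elim0, fun i => i.elim0, fun y hy => ?_⟩
    have h0 : (Fin.snoc (fun i : Fin 0 => i.elim0) y : Fin 1 → ZFSet.{0}) 0 = y := rfl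
    rw [realize_OrdF (Lset_isTransitive o) (h0 ▸ hy), h0]
    constructor
    · intro hmem
      obtain ⟨β, hβ, rfl⟩ := mem_vN.mp hmem
      exact ⟨vN_isTransitive β, vN_trich β⟩
    · rintro ⟨h1, h2⟩
      obtain ⟨β, rfl⟩ := eq_vN_of_ord y o (rank_lt_of_mem_Lset hy).le h1 h2
      refine mem_vN.mpr ⟨β, ?_, rfl⟩
      have := rank_lt_of_mem_Lset hy
      rwa [rank_vN, Ordinal.lift_lt] at this

lemma vN_mem_Lset {β o : Ordinal} (h : β < o) : vN β ∈ Lset o :=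
  Lset_mono (by rw [Ordinal.add_one_eq_succ, Order.succ_le_iff]; exact h)
    (vN_subset_Lset_and_mem β).2

/-! ### Renaming of formulas -/

def rename : {m k : ℕ} → (Fin m → Fin k) → EForm m → EForm k
  | _, _, ρ, .mem i j => .mem (ρ i) (ρ j)
  | _, _, ρ, .eq i j => .eq (ρ i) (ρ j)
  | _, _, ρ, .not φ => .not (rename ρ φ)
  | _, _, ρ, .and φ ψ => .and (rename ρ φ) (rename ρ ψ)
  | _, _, ρ, .ex φ => .ex (rename (Fin.snoc (Fin.castSucc ∘ ρ) (Fin.last _)) φ)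

lemma realize_rename {X : ZFSet.{u}} :
    ∀ {m k : ℕ} (ρ : Fin m → Fin k) (φ : EForm m) (v : Fin k → ZFSet.{u}),
      ERealize X (rename ρ φ) v ↔ ERealize X φ (v ∘ ρ)
  | _, _, ρ, .mem i j, v => Iff.rfl
  | _, _, ρ, .eq i j, v => Iff.rfl
  | _, _, ρ, .not φ, v => by
      rw [rename, realize_not, realize_not, realize_rename]
  | _, _, ρ, .and φ ψ, v => by
      rw [rename, realize_and, realize_and, realize_rename, realize_rename]
  | _, _, ρ, .ex φ, v => by
      rw [rename, realize_ex, realize_ex]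
      refine exists_congr fun y => and_congr_right fun _ => ?_
      rw [realize_rename]
      have : (Fin.snoc v y ∘ Fin.snoc (Fin.castSucc ∘ ρ) (Fin.last _)) =
          Fin.snoc (v ∘ ρ) y := by
        funext i
        refine Fin.lastCases ?_ (fun i => ?_) i
        · simp [Fin.snoc_last]
        · simp [Fin.snoc_castSucc]
      rw [this]

/-- The variable `x` (index `n`) in a context of `n` parameters plus `x, y`. -/
abbrev xVar (n : ℕ) : Fin (n + 2) := (Fin.last n).castSucc
/-- The variable `y` (index `n+1`). -/
abbrev yVar (n : ℕ) : Fin (n + 2) := Fin.last (n + 1)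

/-- Renaming sending the parameters of a formula in context `n+1` to the first `n`
variables of context `n+2`, and the last variable to the last variable. -/
def liftρ (n : ℕ) : Fin (n + 1) → Fin (n + 2) :=
  Fin.snoc (fun i => i.castSucc.castSucc) (Fin.last (n + 1))

lemma snoc_snoc_comp_liftρ {n : ℕ} (p : Fin n → ZFSet.{u}) (x y : ZFSet.{u}) :
    (Fin.snoc (Fin.snoc p x) y ∘ liftρ n) = Fin.snoc p y := by
  funext i
  refine Fin.lastCases ?_ (fun i => ?_) i
  · simp [liftρ, Fin.snoc_last]
  · simp [liftρ, Fin.snoc_castSucc]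

/-- The formula (in context `p₀ … pₙ₋₁ x y`) asserting `∃ a, a ∈ y ∧ x ∈ a ∧ ∀ w ∈ a, w = x`. -/
def thetaF (n : ℕ) : EForm (n + 2) :=
  .ex (.and (.and (.mem (Fin.last (n + 2)) ((yVar n).castSucc))
      (.mem ((xVar n).castSucc) (Fin.last (n + 2))))
    (eAll (eImp (.mem (Fin.last (n + 3)) ((Fin.last (n + 2)).castSucc))
      (.eq (Fin.last (n + 3)) (((xVar n).castSucc).castSucc)))))

lemma realize_thetaF {X : ZFSet.{u}} {n : ℕ} (p : Fin n → ZFSet.{u}) (x y : ZFSet.{u}) :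
    ERealize X (thetaF n) (Fin.snoc (Fin.snoc p x) y) ↔
      ∃ a ∈ X, a ∈ y ∧ x ∈ a ∧ ∀ w ∈ X, w ∈ a → w = x := by
  rw [thetaF, realize_ex]
  refine exists_congr fun a => and_congr_right fun _ => ?_
  rw [realize_and, realize_and, realize_mem, realize_mem]
  simp only [realize_eAll, realize_eImp, realize_mem, realize_eq, xVar, yVar,
    Fin.snoc_last, Fin.snoc_castSucc]
  tauto

/-! ### Universe lifting for ZFSet -/

theorem lift_equiv_iff : ∀ (x y : PSet.{0}),
    PSet.Equiv (PSet.Lift.{0, u} x) (PSet.Lift.{0, u} y) ↔ PSet.Equiv x y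
  | ⟨α, A⟩, ⟨β, B⟩ => by
    constructor
    · rintro ⟨h1, h2⟩
      constructor
      · intro a
        obtain ⟨⟨b⟩, hb⟩ := h1 ⟨a⟩
        exact ⟨b, (lift_equiv_iff (A a) (B b)).mp hb⟩
      · intro b
        obtain ⟨⟨a⟩, ha⟩ := h2 ⟨b⟩
        exact ⟨a, (lift_equiv_iff (A a) (B b)).mp ha⟩
    · rintro ⟨h1, h2⟩
      constructor
      · rintro ⟨a⟩
        obtain ⟨b, hb⟩ := h1 a
        exact ⟨⟨b⟩, (lift_equiv_iff (A a) (B b)).mpr hb⟩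
      · rintro ⟨b⟩
        obtain ⟨a, ha⟩ := h2 b
        exact ⟨⟨a⟩, (lift_equiv_iff (A a) (B b)).mpr ha⟩

theorem lift_mem_iff : ∀ {x y : PSet.{0}},
    PSet.Lift.{0, u} x ∈ PSet.Lift.{0, u} y ↔ x ∈ y
  | x, ⟨β, B⟩ => by
    constructor
    · rintro ⟨⟨b⟩, hb⟩
      exact ⟨b, (lift_equiv_iff x (B b)).mp hb⟩
    · rintro ⟨b, hb⟩
      exact ⟨⟨b⟩, (lift_equiv_iff x (B b)).mpr hb⟩

/-- Universe lift of ZFC sets. -/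
noncomputable def ZLift : ZFSet.{0} → ZFSet.{u} :=
  Quotient.map PSet.Lift.{0, u} fun x y h => (lift_equiv_iff x y).mpr h

lemma ZLift_mk (x : PSet.{0}) : ZLift.{u} (ZFSet.mk x) = ZFSet.mk (PSet.Lift.{0, u} x) := rfl

lemma mem_ZLift_iff {x y : ZFSet.{0}} : ZLift.{u} x ∈ ZLift.{u} y ↔ x ∈ y := by
  induction x using Quotient.inductionOn with | _ x =>
  induction y using Quotient.inductionOn with | _ y =>
  exact lift_mem_iff

lemma ZLift_injective : Function.Injective ZLift.{u} := by
  intro x y h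
  induction x using Quotient.inductionOn with | _ x =>
  induction y using Quotient.inductionOn with | _ y =>
  exact ZFSet.sound ((lift_equiv_iff x y).mp (ZFSet.exact h))

lemma exists_of_mem_ZLift {y : ZFSet.{0}} {z : ZFSet.{u}} (h : z ∈ ZLift.{u} y) :
    ∃ x ∈ y, z = ZLift.{u} x := by
  induction y using Quotient.inductionOn with | _ y =>
  induction z using Quotient.inductionOn with | _ z =>
  obtain ⟨β, B⟩ := y
  obtain ⟨⟨b⟩, hb⟩ := h
  exact ⟨ZFSet.mk (B b), ⟨b, PSet.Equiv.refl _⟩, ZFSet.sound hb⟩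

lemma ZLift_snoc {n : ℕ} (v : Fin n → ZFSet.{0}) (y : ZFSet.{0}) :
    (fun i => ZLift.{u} ((Fin.snoc v y : Fin (n + 1) → ZFSet.{0}) i)) =
      Fin.snoc (fun i => ZLift.{u} (v i)) (ZLift.{u} y) := by
  funext i
  refine Fin.lastCases ?_ (fun i => ?_) i <;> simp [Fin.snoc_last, Fin.snoc_castSucc]

lemma ERealize_ZLift {X : ZFSet.{0}} :
    ∀ {n : ℕ} (φ : EForm n) (v : Fin n → ZFSet.{0}),
      ERealize (ZLift.{u} X) φ (fun i => ZLift.{u} (v i)) ↔ ERealize X φ v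
  | _, .mem i j, v => mem_ZLift_iff
  | _, .eq i j, v => ZLift_injective.eq_iff
  | _, .not φ, v => by rw [realize_not, realize_not, ERealize_ZLift φ v]
  | _, .and φ ψ, v => by
      rw [realize_and, realize_and, ERealize_ZLift φ v, ERealize_ZLift ψ v]
  | _, .ex φ, v => by
      rw [realize_ex, realize_ex]
      constructor
      · rintro ⟨y, hy, h⟩
        obtain ⟨y₀, hy₀, rfl⟩ := exists_of_mem_ZLift hy
        rw [← ZLift_snoc, ERealize_ZLift φ] at h
        exact ⟨y₀, hy₀, h⟩
      · rintro ⟨y, hy, h⟩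
        refine ⟨ZLift.{u} y, mem_ZLift_iff.mpr hy, ?_⟩
        rw [← ZLift_snoc, ERealize_ZLift φ]
        exact h

lemma ZLift_DefSet (X : ZFSet.{0}) : ZLift.{u} (DefSet X) = DefSet (ZLift.{u} X) := by
  apply ZFSet.ext
  intro z
  constructor
  · intro hz
    obtain ⟨S, hS, rfl⟩ := exists_of_mem_ZLift hz
    obtain ⟨hSsub, n, φ, q, hq, hdef⟩ := mem_DefSet.mp hS
    rw [mem_DefSet]
    refine ⟨?_, n, φ, fun i => ZLift.{u} (q i), fun i => mem_ZLift_iff.mpr (hq i),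
      fun w hw => ?_⟩
    · intro w hw
      obtain ⟨x, hx, rfl⟩ := exists_of_mem_ZLift hw
      exact mem_ZLift_iff.mpr (hSsub hx)
    · obtain ⟨y, hy, rfl⟩ := exists_of_mem_ZLift hw
      rw [mem_ZLift_iff, hdef y hy, show (Fin.snoc (fun i => ZLift.{u} (q i)) (ZLift.{u} y) :
        Fin (n+1) → ZFSet.{u}) = fun i => ZLift.{u} ((Fin.snoc q y : Fin (n+1) → ZFSet.{0}) i) from (ZLift_snoc q y).symm,
        ERealize_ZLift φ]
  · intro hz
    obtain ⟨hzsub, n, φ, p', hp', hdef'⟩ := mem_DefSet.mp hz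
    choose q hq using fun i => exists_of_mem_ZLift (hp' i)
    have hp'q : p' = fun i => ZLift.{u} (q i) := funext fun i => (hq i).2
    set S : ZFSet.{0} := ZFSet.sep (fun w => ZLift.{u} w ∈ z) X with hSdef
    have hzS : z = ZLift.{u} S := by
      apply ZFSet.ext
      intro w
      constructor
      · intro hw
        obtain ⟨x, hx, rfl⟩ := exists_of_mem_ZLift (hzsub hw)
        exact mem_ZLift_iff.mpr (ZFSet.mem_sep.mpr ⟨hx, hw⟩)
      · intro hw
        obtain ⟨x, hx, rfl⟩ := exists_of_mem_ZLift hw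
        exact (ZFSet.mem_sep.mp (mem_ZLift_iff.mp hw)).2
    rw [hzS]
    apply mem_ZLift_iff.mpr
    rw [mem_DefSet]
    refine ⟨fun w hw => (ZFSet.mem_sep.mp hw).1, n, φ, q, fun i => (hq i).1, fun y hy => ?_⟩
    have : ZLift.{u} y ∈ z ↔ ERealize X φ (Fin.snoc q y) := by
      rw [hdef' (ZLift.{u} y) (mem_ZLift_iff.mpr hy), hp'q, show (Fin.snoc
        (fun i => ZLift.{u} (q i)) (ZLift.{u} y) : Fin (n+1) → ZFSet.{u}) =
        fun i => ZLift.{u} ((Fin.snoc q y : Fin (n+1) → ZFSet.{0}) i) from (ZLift_snoc q y).symm,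
        ERealize_ZLift φ]
    rw [← this, hSdef, ZFSet.mem_sep]
    exact ⟨fun h => h.2, fun h => ⟨hy, h⟩⟩

lemma ZLift_empty : ZLift.{u} ∅ = ∅ := by
  apply ZFSet.ext
  intro z
  simp only [ZFSet.notMem_empty, iff_false]
  intro hz
  obtain ⟨x, hx, rfl⟩ := exists_of_mem_ZLift hz
  exact ZFSet.notMem_empty x hx

lemma ZLift_Lset (o : Ordinal) : ZLift.{0} (Lset o) = Lset o := by
  induction o using Ordinal.limitRecOn with
  | zero => rw [Lset_zero, ZLift_empty]
  | add_one o ih => rw [Lset_succ, ZLift_DefSet, ih]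
  | limit o ho ih =>
    apply ZFSet.ext
    intro z
    rw [mem_Lset_limit ho]
    constructor
    · intro hz
      obtain ⟨x, hx, rfl⟩ := exists_of_mem_ZLift hz
      obtain ⟨β, hβ, hx⟩ := (mem_Lset_limit ho).mp hx
      exact ⟨β, hβ, by rw [← ih β hβ]; exact mem_ZLift_iff.mpr hx⟩
    · rintro ⟨β, hβ, hz⟩
      rw [← ih β hβ] at hz
      obtain ⟨x, hx, rfl⟩ := exists_of_mem_ZLift hz
      exact mem_ZLift_iff.mpr ((mem_Lset_limit ho).mpr ⟨β, hβ, hx⟩)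

lemma AxColl_ZLift_iff {X : ZFSet.{0}} : AxColl (ZLift.{u} X) ↔ AxColl X := by
  constructor
  · intro h n φ q hq A hA hhyp
    have hhyp' : ∀ x' ∈ ZLift.{u} A, ∃ y ∈ ZLift.{u} X,
        ERealize (ZLift.{u} X) φ (Fin.snoc (Fin.snoc (fun i => ZLift.{u} (q i)) x') y) := by
      intro x' hx'
      obtain ⟨x, hx, rfl⟩ := exists_of_mem_ZLift hx'
      obtain ⟨y, hy, hr⟩ := hhyp x hx
      refine ⟨ZLift.{u} y, mem_ZLift_iff.mpr hy, ?_⟩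
      rw [← ZLift_snoc, ← ZLift_snoc, ERealize_ZLift φ]
      exact hr
    obtain ⟨B', hB', hcol⟩ := h n φ (fun i => ZLift.{u} (q i))
      (fun i => mem_ZLift_iff.mpr (hq i)) (ZLift.{u} A) (mem_ZLift_iff.mpr hA) hhyp'
    obtain ⟨B, hB, rfl⟩ := exists_of_mem_ZLift hB'
    refine ⟨B, hB, fun x hx => ?_⟩
    obtain ⟨y', hy', hr⟩ := hcol (ZLift.{u} x) (mem_ZLift_iff.mpr hx)
    obtain ⟨y, hy, rfl⟩ := exists_of_mem_ZLift hy'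
    refine ⟨y, hy, ?_⟩
    rw [← ZLift_snoc, ← ZLift_snoc, ERealize_ZLift φ] at hr
    exact hr
  · intro h n φ p' hp' A' hA' hhyp
    choose q hq using fun i => exists_of_mem_ZLift (hp' i)
    have hp'q : p' = fun i => ZLift.{u} (q i) := funext fun i => (hq i).2
    obtain ⟨A, hA, rfl⟩ := exists_of_mem_ZLift hA'
    have hhyp' : ∀ x ∈ A, ∃ y ∈ X, ERealize X φ (Fin.snoc (Fin.snoc q x) y) := by
      intro x hx
      obtain ⟨y', hy', hr⟩ := hhyp (ZLift.{u} x) (mem_ZLift_iff.mpr hx)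
      obtain ⟨y, hy, rfl⟩ := exists_of_mem_ZLift hy'
      refine ⟨y, hy, ?_⟩
      rw [hp'q, ← ZLift_snoc, ← ZLift_snoc, ERealize_ZLift φ] at hr
      exact hr
    obtain ⟨B, hB, hcol⟩ := h n φ q (fun i => (hq i).1) A hA hhyp'
    refine ⟨ZLift.{u} B, mem_ZLift_iff.mpr hB, fun x' hx' => ?_⟩
    obtain ⟨x, hx, rfl⟩ := exists_of_mem_ZLift hx'
    obtain ⟨y, hy, hr⟩ := hcol x hx
    refine ⟨ZLift.{u} y, mem_ZLift_iff.mpr hy, ?_⟩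
    rw [hp'q, ← ZLift_snoc, ← ZLift_snoc, ERealize_ZLift φ]
    exact hr

/-! ### Main theorem auxiliary -/

lemma mem_pair' {z a b : ZFSet.{u}} : z ∈ ZFSet.pair a b ↔ z = {a} ∨ z = ({a, b} : ZFSet) := by
  rw [ZFSet.pair]
  exact ZFSet.mem_pair

end Aux

/-- If `α` is a limit ordinal such that `L_α ⊨ ZF⁻`, then `α` is regular in `L_{α+1}`:
no function `f ∈ L_{α+1}` maps some `δ < α` cofinally into `α`. -/
theorem stmt2 (α : Ordinal) (hα : Order.IsSuccLimit α) (hZF : ZFminus (Lset α)) :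
    ¬ ∃ (δ : Ordinal) (f : ZFSet), δ < α ∧ f ∈ Lset (α + 1) ∧ IsCofinalMap δ α f := by
  rintro ⟨δ, f, hδ, hfL, hfunc, hcof⟩
  have hXtr : (Lset α).IsTransitive := Lset_isTransitive α
  rw [Lset_succ, mem_DefSet] at hfL
  obtain ⟨hfsub, n, φ, p, hp, hdef⟩ := hfL
  obtain ⟨-, -, -, -, -, -, hcoll⟩ := hZF
  have h0 : AxColl (Lset α) :=
    AxColl_ZLift_iff.mp (by rw [ZLift_Lset]; exact hcoll)
  have hcoll2 : AxColl (Lset α) := by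
    rw [← ZLift_Lset α]
    exact AxColl_ZLift_iff.mpr h0
  have hA : vN δ ∈ Lset α := vN_mem_Lset hδ
  have hyp : ∀ x ∈ vN δ, ∃ y ∈ Lset α,
      ERealize (Lset α) (.and (rename (liftρ n) φ) (thetaF n)) (Fin.snoc (Fin.snoc p x) y) := by
    intro x hx
    obtain ⟨w, hw, -⟩ := hfunc.2 x hx
    refine ⟨ZFSet.pair x w, hfsub hw, ?_, ?_⟩
    · rw [realize_rename, snoc_snoc_comp_liftρ]
      exact (hdef _ (hfsub hw)).mp hw
    · rw [realize_thetaF]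
      have hay : ({x} : ZFSet) ∈ ZFSet.pair x w := mem_pair'.mpr (Or.inl rfl)
      exact ⟨{x}, hXtr.mem_trans hay (hfsub hw), hay, ZFSet.mem_singleton.mpr rfl,
        fun w' _ hw' => ZFSet.mem_singleton.mp hw'⟩
  obtain ⟨B, hBX, hB⟩ := hcoll2 n (.and (rename (liftρ n) φ) (thetaF n)) p hp (vN δ) hA hyp
  have hrB : ZFSet.rank B < Ordinal.lift α := rank_lt_of_mem_Lset hBX
  obtain ⟨β₀, hβ₀α, hβ₀⟩ := Ordinal.lt_lift_iff.mp hrB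
  obtain ⟨ι, hι, γ, hγ, hβγ, hpair⟩ := hcof β₀ hβ₀α
  have hx : vN ι ∈ vN δ := vN_mem_vN.mpr hι
  obtain ⟨y, hyB, hψy⟩ := hB (vN ι) hx
  have hyX : y ∈ Lset α := hXtr.mem_trans hyB hBX
  rw [realize_and, realize_rename, snoc_snoc_comp_liftρ, realize_thetaF] at hψy
  obtain ⟨hφy, a, haX, hay, hxa, hall⟩ := hψy
  have hyf : y ∈ f := (hdef y hyX).mpr hφy
  obtain ⟨a', ha', b', hb', rfl⟩ := ZFSet.mem_prod.mp (hfunc.1 hyf)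
  have ha'x : a' = vN ι := by
    rcases mem_pair'.mp hay with rfl | rfl
    · exact (ZFSet.mem_singleton.mp hxa).symm
    · exact hall a' (hXtr.subset_of_mem haX (ZFSet.mem_pair.mpr (Or.inl rfl)))
        (ZFSet.mem_pair.mpr (Or.inl rfl))
  subst ha'x
  obtain ⟨w, hw, huniq⟩ := hfunc.2 (vN ι) hx
  have hb'γ : b' = vN γ := (huniq b' hyf).trans (huniq (vN γ) hpair).symm
  have hm1 : ({vN ι, b'} : ZFSet) ∈ ZFSet.pair (vN ι) b' := mem_pair'.mpr (Or.inr rfl)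
  have hm2 : b' ∈ ({vN ι, b'} : ZFSet) := ZFSet.mem_pair.mpr (Or.inr rfl)
  have hchain : ZFSet.rank (vN γ) < ZFSet.rank B := by
    calc ZFSet.rank (vN γ) = ZFSet.rank b' := by rw [hb'γ]
    _ < ZFSet.rank ({vN ι, b'} : ZFSet) := ZFSet.rank_lt_of_mem hm2
    _ < ZFSet.rank (ZFSet.pair (vN ι) b') := ZFSet.rank_lt_of_mem hm1
    _ < ZFSet.rank B := ZFSet.rank_lt_of_mem hyB
  rw [rank_vN, ← hβ₀, Ordinal.lift_lt] at hchain
  exact absurd hβγ (not_le.mpr hchain)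
end

section
/- Consider an abstract machine whose configurations are elements of ω × α^n for fixed n, evolving along ordinal time by a deterministic successor rule and the liminf rule at limits (each coordinate at a limit time is the liminf of its earlier values, with values ≥ α reset to 0). If there exist times ι < ξ such that the configurations at times ι and ξ are equal and every configuration at a time in (ι, ξ) is coordinatewise ≥ the configuration at time ι, then for every ordinal γ the configuration at time ι + δ·γ equals the configuration at time ι, where δ satisfies ι + δ = ξ. In particular the computation never reaches a halting configuration after time ι. -/
open Ordinal

/-- `oliminf l c = sup_{σ<l} inf {c τ : σ ≤ τ < l}`. -/
noncomputable def oliminf (l : Ordinal) (c : Ordinal → Ordinal) : Ordinal :=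
  ⨆ σ : Set.Iio l, sInf (c '' Set.Ico σ.1 l)

lemma bdd_aux {l' B : Ordinal} (g : Ordinal → Ordinal) (hB : ∀ ρ, g ρ ≤ B) :
    BddAbove (Set.range fun σ' : Set.Iio l' => sInf (g '' Set.Ico σ'.1 l')) := by
  refine ⟨B, ?_⟩
  rintro x ⟨⟨σ', hσ'⟩, rfl⟩
  exact le_trans (csInf_le (OrderBot.bddBelow _) ⟨σ', ⟨le_rfl, hσ'⟩, rfl⟩) (hB σ')

lemma ico_decomp {a b x : Ordinal} (h1 : a ≤ x) (h2 : x < a + b) :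
    ∃ u, u < b ∧ x = a + u := by
  refine ⟨x - a, ?_, (Ordinal.add_sub_cancel_of_le h1).symm⟩
  have : a + (x - a) < a + b := by
    rw [Ordinal.add_sub_cancel_of_le h1]; exact h2
  exact (add_lt_add_iff_left a).mp this

lemma oliminf_mono_of_tails {l l' B : Ordinal} (g : Ordinal → Ordinal) (hl : 0 < l)
    (hB : ∀ ρ, g ρ ≤ B)
    (h : ∀ σ, σ < l → ∃ σ', σ' < l' ∧ g '' Set.Ico σ' l' ⊆ g '' Set.Ico σ l) :
    oliminf l g ≤ oliminf l' g := by
  have : Nonempty (Set.Iio l) := ⟨⟨0, hl⟩⟩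
  apply ciSup_le
  rintro ⟨σ, hσ⟩
  obtain ⟨σ', hσ', hsub⟩ := h σ hσ
  have hne : (g '' Set.Ico σ' l').Nonempty := ⟨g σ', ⟨σ', ⟨le_rfl, hσ'⟩, rfl⟩⟩
  have h1 : sInf (g '' Set.Ico σ l) ≤ sInf (g '' Set.Ico σ' l') :=
    le_csInf hne fun b hb => csInf_le (OrderBot.bddBelow _) (hsub hb)
  exact h1.trans (le_ciSup (bdd_aux g hB) (⟨σ', hσ'⟩ : Set.Iio l'))

lemma oliminf_eq_self {ι l B : Ordinal} (g : Ordinal → Ordinal) (hl : ι < l)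
    (hB : ∀ ρ, g ρ ≤ B)
    (hlb : ∀ ρ, ι ≤ ρ → ρ < l → g ι ≤ g ρ)
    (hcof : ∀ σ, σ < l → ∃ ρ, σ ≤ ρ ∧ ι ≤ ρ ∧ ρ < l ∧ g ρ = g ι) :
    oliminf l g = g ι := by
  have hne : Nonempty (Set.Iio l) := ⟨⟨ι, hl⟩⟩
  apply le_antisymm
  · apply ciSup_le
    rintro ⟨σ, hσ⟩
    obtain ⟨ρ, h1, h2, h3, h4⟩ := hcof σ hσ
    calc sInf (g '' Set.Ico σ l) ≤ g ρ := csInf_le (OrderBot.bddBelow _) ⟨ρ, ⟨h1, h3⟩, rfl⟩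
    _ = g ι := h4
  · have h1 : g ι ≤ sInf (g '' Set.Ico ι l) := by
      refine le_csInf ⟨g ι, ⟨ι, ⟨le_rfl, hl⟩, rfl⟩⟩ ?_
      rintro b ⟨ρ, ⟨hρ1, hρ2⟩, rfl⟩
      exact hlb ρ hρ1 hρ2
    exact h1.trans (le_ciSup (bdd_aux g hB) (⟨ι, hl⟩ : Set.Iio l))

lemma oliminf_shift {ι δ B : Ordinal} (hδ0 : 0 < δ) (p e : Ordinal) (he : 0 < e) (hel : e ≤ δ)
    (g : Ordinal → Ordinal) (hB : ∀ ρ, g ρ ≤ B)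
    (hper : ∀ σ, σ < δ * p + e → g (ι + σ) = g (ι + σ % δ)) :
    oliminf (ι + (δ * p + e)) g = oliminf (ι + e) g := by
  have hkey : ∀ u, u < e → g (ι + (δ * p + u)) = g (ι + u) := by
    intro u hu
    rw [hper _ (add_lt_add_right hu _), Ordinal.mul_add_mod_self,
      Ordinal.mod_eq_of_lt (hu.trans_le hel)]
  have hl0 : (0 : Ordinal) < ι + (δ * p + e) :=
    lt_of_lt_of_le (lt_of_lt_of_le he (le_add_self)) le_add_self
  have hl0' : (0 : Ordinal) < ι + e := lt_of_lt_of_le he le_add_self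
  apply le_antisymm
  · apply oliminf_mono_of_tails g hl0 hB
    intro σ hσ
    rcases le_or_gt σ (ι + δ * p) with hc | hc
    · refine ⟨ι, by simpa using add_lt_add_right he ι, ?_⟩
      rintro x ⟨ρ, ⟨hρ1, hρ2⟩, rfl⟩
      obtain ⟨u, hu, rfl⟩ := ico_decomp hρ1 hρ2
      refine ⟨ι + (δ * p + u), ⟨?_, ?_⟩, hkey u hu⟩
      · calc σ ≤ ι + δ * p := hc
        _ ≤ ι + (δ * p + u) := by rw [← add_assoc]; exact le_self_add
      · exact add_lt_add_right (add_lt_add_right hu _) ι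
    · have hσ' : ι + δ * p ≤ σ := hc.le
      rw [← add_assoc] at hσ
      obtain ⟨s, hs, rfl⟩ := ico_decomp hσ' hσ
      refine ⟨ι + s, add_lt_add_right hs ι, ?_⟩
      rintro x ⟨ρ, ⟨hρ1, hρ2⟩, rfl⟩
      have hιρ : ι ≤ ρ := le_trans (le_self_add) hρ1
      obtain ⟨u, hu, rfl⟩ := ico_decomp hιρ hρ2
      have hsu : s ≤ u := (add_le_add_iff_left ι).mp hρ1
      refine ⟨ι + (δ * p + u), ⟨?_, ?_⟩, hkey u hu⟩
      · rw [← add_assoc]; exact add_le_add_right hsu _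
      · exact add_lt_add_right (add_lt_add_right hu _) _
  · apply oliminf_mono_of_tails g hl0' hB
    intro σ' hσ'
    rcases le_or_gt σ' ι with hc | hc
    · refine ⟨ι + δ * p, by rw [← add_assoc]; simpa using add_lt_add_right he (ι + δ * p), ?_⟩
      rintro x ⟨ρ, ⟨hρ1, hρ2⟩, rfl⟩
      rw [← add_assoc] at hρ2
      obtain ⟨u, hu, rfl⟩ := ico_decomp hρ1 hρ2
      rw [add_assoc]
      refine ⟨ι + u, ⟨le_trans hc (le_self_add), add_lt_add_right hu _⟩,
        (hkey u hu).symm⟩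
    · obtain ⟨s, hs, rfl⟩ := ico_decomp hc.le hσ'
      refine ⟨ι + (δ * p + s), ?_, ?_⟩
      · exact add_lt_add_right (add_lt_add_right hs _) _
      · rintro x ⟨ρ, ⟨hρ1, hρ2⟩, rfl⟩
        rw [← add_assoc] at hρ1 hρ2
        obtain ⟨u, hu, rfl⟩ := ico_decomp ((le_self_add).trans hρ1) hρ2
        have hsu : s ≤ u := (add_le_add_iff_left (ι + δ * p)).mp hρ1
        rw [add_assoc]
        refine ⟨ι + u, ⟨add_le_add_right hsu _, add_lt_add_right hu _⟩, (hkey u hu).symm⟩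

/-- A machine with configurations in `ω × α^n`, evolving along ordinal time by a deterministic
successor rule `F` and the liminf rule at limits (with register values that reach `α` reset
to `0`).  If there are times `ι < ξ` with equal configurations such that every configuration
strictly in between is coordinatewise `≥` the one at time `ι`, then for every ordinal `γ` the
configuration at time `ι + δ·γ` (where `ι + δ = ξ`) equals the configuration at time `ι`; in
particular every configuration occurring at a time `≥ ι` already occurs at some time in
`[ι, ξ)`, so no halting configuration avoided up to time `ξ` is ever reached after time `ι`. -/
theorem stmt4 (α : Ordinal) (n : ℕ)
    (F : ℕ × (Fin n → Ordinal) → ℕ × (Fin n → Ordinal))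
    (c : Ordinal → ℕ × (Fin n → Ordinal))
    (hreg : ∀ τ i, (c τ).2 i < α)
    (hsucc : ∀ τ, c (τ + 1) = F (c τ))
    (hlim_state : ∀ l : Ordinal, Order.IsSuccLimit l →
      ((c l).1 : Ordinal) = oliminf l fun τ => ((c τ).1 : Ordinal))
    (hlim_reg : ∀ l : Ordinal, Order.IsSuccLimit l → ∀ i,
      (c l).2 i = if oliminf l (fun τ => (c τ).2 i) = α then 0
                  else oliminf l (fun τ => (c τ).2 i))
    (ι ξ δ : Ordinal) (hιξ : ι < ξ) (hδ : ι + δ = ξ)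
    (heq : c ι = c ξ)
    (hge : ∀ τ, ι < τ → τ < ξ →
      (c ι).1 ≤ (c τ).1 ∧ ∀ i, (c ι).2 i ≤ (c τ).2 i) :
    (∀ γ : Ordinal, c (ι + δ * γ) = c ι) ∧
      (∀ τ, ι ≤ τ → ∃ σ, ι ≤ σ ∧ σ < ξ ∧ c τ = c σ) := by
  subst hδ
  have hδ0 : 0 < δ := by
    rcases eq_zero_or_pos δ with h | h
    · subst h; simp at hιξ
    · exact h
  have hgeρ : ∀ ρ, ρ < δ →
      (c ι).1 ≤ (c (ι + ρ)).1 ∧ ∀ i, (c ι).2 i ≤ (c (ι + ρ)).2 i := by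
    intro ρ hρ
    rcases eq_zero_or_pos ρ with h | h
    · subst h; simp
    · exact hge _ (by simpa using add_lt_add_right h ι) (add_lt_add_right hρ ι)
  have config_eq : ∀ l l' : Ordinal, Order.IsSuccLimit l → Order.IsSuccLimit l' →
      oliminf l (fun ρ => ((c ρ).1 : Ordinal)) = oliminf l' (fun ρ => ((c ρ).1 : Ordinal)) →
      (∀ i, oliminf l (fun ρ => (c ρ).2 i) = oliminf l' (fun ρ => (c ρ).2 i)) →
      c l = c l' := by
    intro l l' h1 h2 hs hr
    refine Prod.ext ?_ ?_
    · have := (hlim_state l h1).trans (hs.trans (hlim_state l' h2).symm)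
      exact_mod_cast this
    · funext i
      rw [hlim_reg l h1 i, hlim_reg l' h2 i, hr i]
  have main : ∀ τ, c (ι + τ) = c (ι + τ % δ) := by
    intro τ
    induction τ using Ordinal.induction with
    | _ τ IH =>
    rcases lt_or_ge τ δ with hτδ | hτδ
    · rw [Ordinal.mod_eq_of_lt hτδ]
    rcases Ordinal.zero_or_succ_or_isSuccLimit τ with h0 | ⟨σ, hσ⟩ | hlim
    · subst h0; rw [Ordinal.zero_mod]
    · -- successor case
      subst hσ
      have hIHσ := IH σ (Order.lt_succ σ)
      have hs : σ % δ < δ := Ordinal.mod_lt σ hδ0.ne'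
      have hstep : c (ι + Order.succ σ) = c (ι + (σ % δ + 1)) := by
        rw [← Ordinal.add_one_eq_succ, ← add_assoc, hsucc, hIHσ, ← hsucc, add_assoc]
      have h2 : σ % δ + 1 ≤ δ := by
        rw [Ordinal.add_one_eq_succ]; exact Order.succ_le_of_lt hs
      rcases h2.lt_or_eq with h | h
      · have hmod : Order.succ σ % δ = σ % δ + 1 := by
          rw [← Ordinal.add_one_eq_succ]
          have e : σ + 1 = δ * (σ / δ) + (σ % δ + 1) := by
            rw [← add_assoc, Ordinal.div_add_mod]
          rw [e, Ordinal.mul_add_mod_self, Ordinal.mod_eq_of_lt h]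
        rw [hmod]; exact hstep
      · have hmod : Order.succ σ % δ = 0 := by
          rw [← Ordinal.add_one_eq_succ]
          have e : σ + 1 = δ * (σ / δ) + δ := by
            conv_lhs => rw [← Ordinal.div_add_mod σ δ]
            rw [add_assoc, h]
          rw [e, Ordinal.mul_add_mod_self, Ordinal.mod_self]
        rw [hmod, add_zero, hstep, h]
        exact heq.symm
    · -- limit case
      have hdm : δ * (τ / δ) + τ % δ = τ := Ordinal.div_add_mod τ δ
      have hrδ : τ % δ < δ := Ordinal.mod_lt τ hδ0.ne'
      have hτlim : Order.IsSuccLimit (ι + τ) := Ordinal.isSuccLimit_add ι hlim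
      have not_succ : ∀ x, τ ≠ x + 1 := by
        intro x hx
        have hxτ : x < τ := by rw [hx, Ordinal.add_one_eq_succ]; exact Order.lt_succ x
        have := hlim.succ_lt hxτ
        rw [← Ordinal.add_one_eq_succ, ← hx] at this
        exact lt_irrefl τ this
      rcases eq_or_ne (τ % δ) 0 with hr | hr
      · -- r = 0
        rw [hr, add_zero] at hdm ⊢
        rcases Ordinal.zero_or_succ_or_isSuccLimit (τ / δ) with hq | ⟨q', hq⟩ | hq
        · exfalso
          rw [hq, mul_zero] at hdm
          exact hlim.pos.ne' hdm.symm
        · -- q successor: δ must be a limit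
          have hδlim : Order.IsSuccLimit δ := by
            rcases Ordinal.zero_or_succ_or_isSuccLimit δ with h | ⟨d, hd⟩ | h
            · exact absurd h hδ0.ne'
            · exfalso
              apply not_succ (δ * q' + d)
              rw [← hdm, ← hq, mul_succ, ← hd, ← Ordinal.add_one_eq_succ, add_assoc]
            · exact h
          have hξlim : Order.IsSuccLimit (ι + δ) := Ordinal.isSuccLimit_add ι hδlim
          have hτeq : τ = δ * q' + δ := by
            rw [← hdm, ← hq, mul_succ]
          have key_state : oliminf (ι + τ) (fun ρ => ((c ρ).1 : Ordinal))
              = oliminf (ι + δ) (fun ρ => ((c ρ).1 : Ordinal)) := by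
            rw [hτeq]
            exact oliminf_shift hδ0 q' δ hδ0 le_rfl _ (fun ρ => (Ordinal.nat_lt_omega0 _).le)
              (fun σ hσ => congrArg (fun p => ((p.1 : ℕ) : Ordinal)) (IH σ (hτeq ▸ hσ)))
          have key_reg : ∀ i, oliminf (ι + τ) (fun ρ => (c ρ).2 i)
              = oliminf (ι + δ) (fun ρ => (c ρ).2 i) := by
            intro i
            rw [hτeq]
            exact oliminf_shift hδ0 q' δ hδ0 le_rfl _ (fun ρ => (hreg ρ i).le)
              (fun σ hσ => congrArg (fun p => p.2 i) (IH σ (hτeq ▸ hσ)))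
          have h1 : c (ι + τ) = c (ι + δ) :=
            config_eq _ _ hτlim hξlim key_state key_reg
          rw [h1]; exact heq.symm
        · -- q limit: all tails contain a copy of c ι
          have hτq : δ * (τ / δ) = τ := hdm
          have hιl : ι < ι + τ := by simpa using add_lt_add_right hlim.pos ι
          have hcof : ∀ σ, σ < ι + τ →
              ∃ ρ, σ ≤ ρ ∧ ι ≤ ρ ∧ ρ < ι + τ ∧ c ρ = c ι := by
            intro σ hσ
            rcases le_or_gt σ ι with h | h
            · exact ⟨ι, h, le_rfl, hιl, rfl⟩
            · obtain ⟨w, hw, rfl⟩ := ico_decomp h.le hσ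
              have hdiv : w / δ < τ / δ := by
                rw [Ordinal.div_lt hδ0.ne', hτq]
                exact hw
              have hdiv1 : w / δ + 1 < τ / δ := by
                rw [Ordinal.add_one_eq_succ]
                exact hq.succ_lt hdiv
              have hwle : w ≤ δ * (w / δ + 1) := by
                rw [Ordinal.add_one_eq_succ]
                exact (Ordinal.lt_mul_succ_div w hδ0.ne').le
              have hlt : δ * (w / δ + 1) < τ := by
                rw [← hτq]
                exact mul_lt_mul_of_pos_left hdiv1 hδ0
              refine ⟨ι + δ * (w / δ + 1), add_le_add_right hwle ι, le_self_add,
                add_lt_add_right hlt ι, ?_⟩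
              rw [IH _ hlt, Ordinal.mul_mod, add_zero]
          have hlb : ∀ ρ, ι ≤ ρ → ρ < ι + τ →
              (c ι).1 ≤ (c ρ).1 ∧ ∀ i, (c ι).2 i ≤ (c ρ).2 i := by
            intro ρ h1 h2
            obtain ⟨w, hw, rfl⟩ := ico_decomp h1 h2
            rw [IH w hw]
            exact hgeρ _ (Ordinal.mod_lt w hδ0.ne')
          refine Prod.ext ?_ ?_
          · have hs := oliminf_eq_self (l := ι + τ) (fun ρ => ((c ρ).1 : Ordinal)) hιl
              (fun ρ => (Ordinal.nat_lt_omega0 _).le)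
              (fun ρ h1 h2 => by
                show ((c ι).1 : Ordinal) ≤ ((c ρ).1 : Ordinal)
                exact_mod_cast (hlb ρ h1 h2).1)
              (fun σ hσ => by
                obtain ⟨ρ, ha, hb, hc, hd⟩ := hcof σ hσ
                exact ⟨ρ, ha, hb, hc, congrArg (fun p => ((p.1 : ℕ) : Ordinal)) hd⟩)
            have h2 : ((c (ι + τ)).1 : Ordinal) = ((c ι).1 : Ordinal) :=
              (hlim_state _ hτlim).trans hs
            exact_mod_cast h2
          · funext i
            have hs := oliminf_eq_self (l := ι + τ) (fun ρ => (c ρ).2 i) hιl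
              (fun ρ => (hreg ρ i).le)
              (fun ρ h1 h2 => (hlb ρ h1 h2).2 i)
              (fun σ hσ => by
                obtain ⟨ρ, ha, hb, hc, hd⟩ := hcof σ hσ
                exact ⟨ρ, ha, hb, hc, congrArg (fun p => p.2 i) hd⟩)
            rw [hlim_reg _ hτlim i, hs, if_neg (hreg ι i).ne]
      · -- r ≠ 0 : r is a limit
        have hrlim : Order.IsSuccLimit (τ % δ) := by
          rcases Ordinal.zero_or_succ_or_isSuccLimit (τ % δ) with h | ⟨d, hd⟩ | h
          · exact absurd h hr
          · exfalso
            have e : τ = δ * (τ / δ) + (d + 1) := by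
              conv_lhs => rw [← hdm]
              rw [← hd, Ordinal.add_one_eq_succ]
            exact not_succ (δ * (τ / δ) + d) (e.trans (add_assoc _ d 1).symm)
          · exact h
        have hrlim' : Order.IsSuccLimit (ι + τ % δ) := Ordinal.isSuccLimit_add ι hrlim
        have key_state : oliminf (ι + τ) (fun ρ => ((c ρ).1 : Ordinal))
            = oliminf (ι + τ % δ) (fun ρ => ((c ρ).1 : Ordinal)) := by
          conv_lhs => rw [← hdm]
          exact oliminf_shift hδ0 (τ / δ) (τ % δ) hrlim.pos hrδ.le _
            (fun ρ => (Ordinal.nat_lt_omega0 _).le)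
            (fun σ hσ => congrArg (fun p => ((p.1 : ℕ) : Ordinal))
              (IH σ (by rw [← hdm]; exact hσ)))
        have key_reg : ∀ i, oliminf (ι + τ) (fun ρ => (c ρ).2 i)
            = oliminf (ι + τ % δ) (fun ρ => (c ρ).2 i) := by
          intro i
          conv_lhs => rw [← hdm]
          exact oliminf_shift hδ0 (τ / δ) (τ % δ) hrlim.pos hrδ.le _
            (fun ρ => (hreg ρ i).le)
            (fun σ hσ => congrArg (fun p => p.2 i) (IH σ (by rw [← hdm]; exact hσ)))
        exact config_eq _ _ hτlim hrlim' key_state key_reg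
  constructor
  · intro γ
    have := main (δ * γ)
    rwa [Ordinal.mul_mod, add_zero] at this
  · intro τ hτ
    refine ⟨ι + (τ - ι) % δ, le_self_add,
      add_lt_add_right (Ordinal.mod_lt _ hδ0.ne') ι, ?_⟩
    have := main (τ - ι)
    rwa [Ordinal.add_sub_cancel_of_le hτ] at this
end
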